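/- Let A ∈ ℍ^{m×n} be a quaternion matrix, let S₂ ∈ ℍ^{l×m} and T₂ ∈ ℍ^{n×t}, let Y ∈ ℍ^{t×l} be a {1}-inverse of S₂AT₂ (i.e. (S₂AT₂)·Y·(S₂AT₂) = S₂AT₂), and set X = T₂YS₂. Then X satisfies the three conditions XAX = X, R_l(X) = R_l(S₂), and N_l(X) = N_l(T₂) if and only if rank(S₂AT₂) = rank(S₂) = rank(T₂); moreover, when these rank equalities hold, X is the unique quaternion matrix in ℍ^{n×m} satisfying these three conditions. -/

import Mathlib

open Matrix

noncomputable section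

/-- The real quaternion division ring ℍ. -/
abbrev Quat : Type := Quaternion ℝ

/-- Left range `R_l(A) = {xA : x ∈ ℍ^{1×m}} ⊆ ℍ^{1×n}`. -/
def leftRange {m n : ℕ} (A : Matrix (Fin m) (Fin n) Quat) : Set (Fin n → Quat) :=
  {y | ∃ x : Fin m → Quat, y = Matrix.vecMul x A}

/-- Left null space `N_l(A) = {x ∈ ℍ^{1×m} : xA = 0}`. -/
def leftNull {m n : ℕ} (A : Matrix (Fin m) (Fin n) Quat) : Set (Fin m → Quat) :=
  {x | Matrix.vecMul x A = 0}

/-- Right range `R_r(A) = {Ax : x ∈ ℍ^{n×1}} ⊆ ℍ^{m×1}`. -/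
def rightRange {m n : ℕ} (A : Matrix (Fin m) (Fin n) Quat) : Set (Fin m → Quat) :=
  {y | ∃ x : Fin n → Quat, y = Matrix.mulVec A x}

/-- Right null space `N_r(A) = {x ∈ ℍ^{n×1} : Ax = 0}`. -/
def rightNull {m n : ℕ} (A : Matrix (Fin m) (Fin n) Quat) : Set (Fin n → Quat) :=
  {x | Matrix.mulVec A x = 0}

/-- The rank of a quaternion matrix: the dimension of its left range
(the left ℍ-span of its rows) as a left ℍ-vector space. -/
def qRank {m n : ℕ} (A : Matrix (Fin m) (Fin n) Quat) : ℕ :=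
  Module.finrank Quat (Submodule.span Quat (Set.range (fun i : Fin m => A i)))

namespace QAux

/-- Right multiplication by a matrix, as a left-linear map. -/
noncomputable def fM {a b : ℕ} (A : Matrix (Fin a) (Fin b) Quat) :
    (Fin a → Quat) →ₗ[Quat] (Fin b → Quat) where
  toFun x := Matrix.vecMul x A
  map_add' x y := Matrix.add_vecMul A x y
  map_smul' c x := Matrix.smul_vecMul c x A

lemma fM_apply {a b : ℕ} (A : Matrix (Fin a) (Fin b) Quat) (x : Fin a → Quat) :
    fM A x = Matrix.vecMul x A := rfl

lemma fM_mul {a b c : ℕ} (A : Matrix (Fin a) (Fin b) Quat) (B : Matrix (Fin b) (Fin c) Quat) :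
    fM (A * B) = (fM B).comp (fM A) := by
  apply LinearMap.ext
  intro x
  exact (Matrix.vecMul_vecMul x A B).symm

lemma range_fM {a b : ℕ} (A : Matrix (Fin a) (Fin b) Quat) :
    LinearMap.range (fM A) = Submodule.span Quat (Set.range (fun i : Fin a => A i)) := by
  apply le_antisymm
  · rintro y ⟨x, rfl⟩
    rw [fM_apply, show Matrix.vecMul x A = ∑ i, x i • A i by
      funext j; simp [Matrix.vecMul, dotProduct]]
    exact Submodule.sum_mem _ fun i _ => Submodule.smul_mem _ _ (Submodule.subset_span ⟨i, rfl⟩)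
  · rw [Submodule.span_le]
    rintro y ⟨i, rfl⟩
    exact ⟨Pi.single i 1, Matrix.single_one_vecMul i A⟩

lemma qRank_eq {a b : ℕ} (A : Matrix (Fin a) (Fin b) Quat) :
    qRank A = Module.finrank Quat (LinearMap.range (fM A)) := by
  rw [qRank, range_fM]

lemma leftRange_eq {a b : ℕ} (A : Matrix (Fin a) (Fin b) Quat) :
    leftRange A = ↑(LinearMap.range (fM A)) := by
  ext y
  simp [leftRange, fM_apply, eq_comm]

lemma leftNull_eq {a b : ℕ} (A : Matrix (Fin a) (Fin b) Quat) :
    leftNull A = ↑(LinearMap.ker (fM A)) := by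
  ext x
  simp [leftNull, fM_apply]

lemma rank_nullity {a b : ℕ} (A : Matrix (Fin a) (Fin b) Quat) :
    qRank A + Module.finrank Quat (LinearMap.ker (fM A)) = a := by
  rw [qRank_eq, LinearMap.finrank_range_add_finrank_ker, Module.finrank_fin_fun]

lemma matrix_eq_of_vecMul {a b : ℕ} {M N : Matrix (Fin a) (Fin b) Quat}
    (h : ∀ v : Fin a → Quat, Matrix.vecMul v M = Matrix.vecMul v N) : M = N := by
  have h' : ∀ i, M i = N i := fun i => by
    have := h (Pi.single i 1); rwa [Matrix.single_one_vecMul, Matrix.single_one_vecMul] at this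
  exact Matrix.ext fun i j => congrFun (h' i) j

/-- Uniqueness: two "reflexive {2}-inverses" with the same left range and left
null space coincide. -/
lemma unique_aux {m n : ℕ} (A : Matrix (Fin m) (Fin n) Quat)
    (X Z : Matrix (Fin n) (Fin m) Quat)
    (hXx : X * A * X = X) (hZz : Z * A * Z = Z)
    (hR : leftRange Z = leftRange X) (hN : leftNull Z = leftNull X) : Z = X := by
  apply matrix_eq_of_vecMul
  intro v
  -- step a : v Z A X = v Z
  have hZmem : Matrix.vecMul v Z ∈ leftRange Z := ⟨v, rfl⟩
  rw [hR] at hZmem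
  obtain ⟨u, hu⟩ := hZmem
  have hXu := congrArg (Matrix.vecMul u) hXx
  simp only [← Matrix.vecMul_vecMul] at hXu
  have stepa : Matrix.vecMul (Matrix.vecMul (Matrix.vecMul v Z) A) X = Matrix.vecMul v Z := by
    rw [hu, hXu]
  -- step b : v Z A X = v X
  have hdmem : (Matrix.vecMul (Matrix.vecMul v Z) A - v) ∈ leftNull Z := by
    show Matrix.vecMul _ Z = 0
    rw [Matrix.sub_vecMul]
    have hZu := congrArg (Matrix.vecMul v) hZz
    simp only [← Matrix.vecMul_vecMul] at hZu
    rw [hZu, sub_self]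
  rw [hN] at hdmem
  have stepb : Matrix.vecMul (Matrix.vecMul (Matrix.vecMul v Z) A) X = Matrix.vecMul v X := by
    have : Matrix.vecMul (Matrix.vecMul (Matrix.vecMul v Z) A - v) X = 0 := hdmem
    rw [Matrix.sub_vecMul, sub_eq_zero] at this
    exact this
  rw [← stepa, stepb]

end QAux

open QAux in
/-- Theorem 3.5 (d). -/
theorem stmt11 {m n l t : ℕ} (A : Matrix (Fin m) (Fin n) Quat)
    (S₂ : Matrix (Fin l) (Fin m) Quat) (T₂ : Matrix (Fin n) (Fin t) Quat)
    (Y : Matrix (Fin t) (Fin l) Quat)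
    (hY : (S₂ * A * T₂) * Y * (S₂ * A * T₂) = S₂ * A * T₂)
    (X : Matrix (Fin n) (Fin m) Quat) (hX : X = T₂ * Y * S₂) :
    ((X * A * X = X ∧ leftRange X = leftRange S₂ ∧ leftNull X = leftNull T₂) ↔
      (qRank (S₂ * A * T₂) = qRank S₂ ∧ qRank (S₂ * A * T₂) = qRank T₂)) ∧
    (qRank (S₂ * A * T₂) = qRank S₂ → qRank (S₂ * A * T₂) = qRank T₂ →
      ∀ Z : Matrix (Fin n) (Fin m) Quat,
        Z * A * Z = Z → leftRange Z = leftRange S₂ → leftNull Z = leftNull T₂ →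
          Z = X) := by
  -- decompositions of fM (S₂*A*T₂)
  have hfB1 : fM (S₂ * A * T₂) = (fM (A * T₂)).comp (fM S₂) := by
    rw [Matrix.mul_assoc]; exact fM_mul _ _
  have hfB2 : fM (S₂ * A * T₂) = (fM T₂).comp (fM (S₂ * A)) := fM_mul _ _
  have hrange2 : LinearMap.range (fM (S₂ * A * T₂)) ≤ LinearMap.range (fM T₂) := by
    rw [hfB2]; exact LinearMap.range_comp_le_range _ _
  have hker1 : LinearMap.ker (fM S₂) ≤ LinearMap.ker (fM (S₂ * A * T₂)) := by
    rw [hfB1]; exact LinearMap.ker_le_ker_comp _ _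
  have hBleS : qRank (S₂ * A * T₂) ≤ qRank S₂ := by
    rw [qRank_eq, qRank_eq, hfB1, LinearMap.range_comp]
    exact Submodule.finrank_map_le _ _
  have hBleT : qRank (S₂ * A * T₂) ≤ qRank T₂ := by
    rw [qRank_eq (S₂ * A * T₂), qRank_eq T₂]
    exact Submodule.finrank_mono hrange2
  -- The "backward" implication
  have backward : qRank (S₂ * A * T₂) = qRank S₂ → qRank (S₂ * A * T₂) = qRank T₂ →
      (X * A * X = X ∧ leftRange X = leftRange S₂ ∧ leftNull X = leftNull T₂) := by
    intro hS hT
    have keyRange : LinearMap.range (fM (S₂ * A * T₂)) = LinearMap.range (fM T₂) := by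
      apply Submodule.eq_of_le_of_finrank_eq hrange2
      rw [← qRank_eq, ← qRank_eq]; exact hT
    have keyKer : LinearMap.ker (fM S₂) = LinearMap.ker (fM (S₂ * A * T₂)) := by
      apply Submodule.eq_of_le_of_finrank_eq hker1
      have e1 := rank_nullity S₂
      have e2 := rank_nullity (S₂ * A * T₂)
      omega
    -- Condition 1 : X A X = X
    have cond1 : X * A * X = X := by
      subst hX
      apply matrix_eq_of_vecMul
      intro v
      have hmem : Matrix.vecMul v T₂ ∈ LinearMap.range (fM T₂) := ⟨v, rfl⟩
      rw [← keyRange] at hmem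
      obtain ⟨u, hu⟩ := hmem
      rw [fM_apply] at hu
      simp only [← Matrix.vecMul_vecMul] at hu ⊢
      have hYu := congrArg (Matrix.vecMul u) hY
      simp only [← Matrix.vecMul_vecMul] at hYu
      rw [← hu, hYu]
    -- Condition 3 : leftNull X = leftNull T₂
    have cond3 : leftNull X = leftNull T₂ := by
      subst hX
      ext v
      constructor
      · intro h
        have h' : Matrix.vecMul v (T₂ * Y * S₂) = 0 := h
        simp only [← Matrix.vecMul_vecMul] at h'
        have hmem : Matrix.vecMul v T₂ ∈ LinearMap.range (fM T₂) := ⟨v, rfl⟩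
        rw [← keyRange] at hmem
        obtain ⟨u, hu⟩ := hmem
        rw [fM_apply] at hu
        simp only [← Matrix.vecMul_vecMul] at hu
        have h'' := congrArg (fun w => Matrix.vecMul (Matrix.vecMul w A) T₂) h'
        simp only [Matrix.zero_vecMul] at h''
        have hYu := congrArg (Matrix.vecMul u) hY
        simp only [← Matrix.vecMul_vecMul] at hYu
        rw [← hu, hYu, hu] at h''
        exact h''
      · intro h
        have h' : Matrix.vecMul v T₂ = 0 := h
        show Matrix.vecMul v (T₂ * Y * S₂) = 0
        simp only [← Matrix.vecMul_vecMul]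
        rw [h', Matrix.zero_vecMul, Matrix.zero_vecMul]
    -- Condition 2 : leftRange X = leftRange S₂
    have cond2 : leftRange X = leftRange S₂ := by
      subst hX
      ext y
      constructor
      · rintro ⟨v, rfl⟩
        refine ⟨Matrix.vecMul (Matrix.vecMul v T₂) Y, ?_⟩
        simp only [← Matrix.vecMul_vecMul]
      · rintro ⟨w, rfl⟩
        -- z = w B Y - w  has z B = 0 hence z S₂ = 0
        have hz : Matrix.vecMul
            (Matrix.vecMul (Matrix.vecMul w (S₂ * A * T₂)) Y - w) (S₂ * A * T₂) = 0 := by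
          rw [Matrix.sub_vecMul]
          have hYw := congrArg (Matrix.vecMul w) hY
          simp only [← Matrix.vecMul_vecMul] at hYw ⊢
          rw [hYw, sub_self]
        have hzker : (Matrix.vecMul (Matrix.vecMul w (S₂ * A * T₂)) Y - w) ∈
            LinearMap.ker (fM S₂) := by
          rw [keyKer]
          exact hz
        have hzS : Matrix.vecMul
            (Matrix.vecMul (Matrix.vecMul w (S₂ * A * T₂)) Y - w) S₂ = 0 := hzker
        rw [Matrix.sub_vecMul, sub_eq_zero] at hzS
        refine ⟨Matrix.vecMul (Matrix.vecMul w S₂) A, ?_⟩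
        simp only [← Matrix.vecMul_vecMul] at hzS ⊢
        exact hzS.symm
    exact ⟨cond1, cond2, cond3⟩
  constructor
  · constructor
    · rintro ⟨h1, h2, h3⟩
      -- ranges and kernels of X
      have hrXS : LinearMap.range (fM X) = LinearMap.range (fM S₂) := by
        apply SetLike.coe_injective
        rw [← leftRange_eq, ← leftRange_eq]
        exact h2
      have hkXT : LinearMap.ker (fM X) = LinearMap.ker (fM T₂) := by
        apply SetLike.coe_injective
        rw [← leftNull_eq, ← leftNull_eq]
        exact h3
      have hXS : qRank X = qRank S₂ := by
        rw [qRank_eq, qRank_eq, hrXS]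
      have hXT : qRank X = qRank T₂ := by
        have e1 := rank_nullity X
        have e2 := rank_nullity T₂
        rw [hkXT] at e1
        omega
      -- qRank X ≤ qRank (S₂*A*T₂)
      have hX2 : X = (T₂ * Y) * (S₂ * A * T₂) * (Y * S₂) := by
        rw [← h1, hX]
        simp only [Matrix.mul_assoc]
      have hXleB : qRank X ≤ qRank (S₂ * A * T₂) := by
        rw [qRank_eq X, qRank_eq (S₂ * A * T₂), hX2,
          fM_mul ((T₂ * Y) * (S₂ * A * T₂)) (Y * S₂), fM_mul (T₂ * Y) (S₂ * A * T₂),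
          LinearMap.range_comp]
        calc
          Module.finrank Quat
              ((LinearMap.range ((fM (S₂ * A * T₂)).comp (fM (T₂ * Y)))).map (fM (Y * S₂))) ≤
              Module.finrank Quat ((LinearMap.range (fM (S₂ * A * T₂))).map (fM (Y * S₂))) :=
            Submodule.finrank_mono (Submodule.map_mono (LinearMap.range_comp_le_range _ _))
          _ ≤ Module.finrank Quat (LinearMap.range (fM (S₂ * A * T₂))) :=
            Submodule.finrank_map_le _ _
      constructor
      · exact le_antisymm hBleS (hXS ▸ hXleB)
      · exact le_antisymm hBleT (hXT ▸ hXleB)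
    · rintro ⟨hS, hT⟩
      exact backward hS hT
  · intro hS hT Z hZ1 hZ2 hZ3
    obtain ⟨hx1, hx2, hx3⟩ := backward hS hT
    exact unique_aux A X Z hx1 hZ1 (hZ2.trans hx2.symm) (hZ3.trans hx3.symm)

end
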